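/- Let K be a commutative ring, R = K⟨x,y⟩/(x², y³, (x+y)⁴), and let J be the two-sided ideal of R generated by x and y. Suppose f = θ₁·xy + θ₂·yx + θ₃·y² + g with θ₁, θ₂, θ₃ ∈ K and g ∈ J³. Then (x + y + f)⁴ − (θ₁ + θ₂ − 2θ₃)·yxyxy ∈ J⁶. -/

import Mathlib

noncomputable section

/-- The relations `x² = 0`, `y³ = 0`, `(x+y)⁴ = 0` on `K⟨x,y⟩`, with `x = ι 0`, `y = ι 1`. -/
inductive Rel7 (K : Type*) [CommRing K] :
    FreeAlgebra K (Fin 2) → FreeAlgebra K (Fin 2) → Prop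
  | xx : Rel7 K (FreeAlgebra.ι K 0 * FreeAlgebra.ι K 0) 0
  | yyy : Rel7 K (FreeAlgebra.ι K 1 * (FreeAlgebra.ι K 1 * FreeAlgebra.ι K 1)) 0
  | pow : Rel7 K ((FreeAlgebra.ι K 0 + FreeAlgebra.ι K 1) ^ 4) 0

/-- The algebra `R(E₇) = K⟨x,y⟩/(x², y³, (x+y)⁴)`. -/
abbrev RE7 (K : Type*) [CommRing K] := RingQuot (Rel7 K)

/-- The image of `x` in `R(E₇)`. -/
def e7x (K : Type*) [CommRing K] : RE7 K :=
  RingQuot.mkRingHom (Rel7 K) (FreeAlgebra.ι K 0)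

/-- The image of `y` in `R(E₇)`. -/
def e7y (K : Type*) [CommRing K] : RE7 K :=
  RingQuot.mkRingHom (Rel7 K) (FreeAlgebra.ι K 1)

/-- The two-sided ideal of `R(E₇)` generated by `x` and `y`, viewed as a `K`-submodule
(so that its powers are available via submodule multiplication). -/
def JE7 (K : Type*) [CommRing K] : Submodule K (RE7 K) :=
  ⊤ * Submodule.span K {e7x K, e7y K} * ⊤

section Aux

variable (K : Type*) [CommRing K]

private lemma e7_xx : e7x K * e7x K = 0 := by
  simpa only [e7x, map_mul, map_zero] using RingQuot.mkRingHom_rel (Rel7.xx (K := K))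

private lemma e7_yyy : e7y K * (e7y K * e7y K) = 0 := by
  simpa only [e7y, map_mul, map_zero] using RingQuot.mkRingHom_rel (Rel7.yyy (K := K))

private lemma e7_s4 : (e7x K + e7y K) ^ 4 = 0 := by
  simpa only [e7x, e7y, map_pow, map_add, map_zero] using
    RingQuot.mkRingHom_rel (Rel7.pow (K := K))

private lemma e7_top_mul_top : (⊤ : Submodule K (RE7 K)) * ⊤ = ⊤ := by
  refine le_antisymm le_top ?_
  intro a _
  have h := Submodule.mul_mem_mul (show a ∈ (⊤ : Submodule K (RE7 K)) from Submodule.mem_top)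
    (show (1 : RE7 K) ∈ (⊤ : Submodule K (RE7 K)) from Submodule.mem_top)
  simpa using h

private lemma e7_J_mul_top : JE7 K * ⊤ = JE7 K := by
  show ⊤ * Submodule.span K {e7x K, e7y K} * ⊤ * ⊤ = ⊤ * Submodule.span K {e7x K, e7y K} * ⊤
  rw [mul_assoc (⊤ * Submodule.span K {e7x K, e7y K}), e7_top_mul_top]

private lemma e7_x_mem : e7x K ∈ JE7 K := by
  have h := Submodule.mul_mem_mul
    (Submodule.mul_mem_mul
      (show (1 : RE7 K) ∈ (⊤ : Submodule K (RE7 K)) from Submodule.mem_top)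
      (Submodule.subset_span (show e7x K ∈ ({e7x K, e7y K} : Set (RE7 K)) by simp)))
    (show (1 : RE7 K) ∈ (⊤ : Submodule K (RE7 K)) from Submodule.mem_top)
  simpa [JE7] using h

private lemma e7_y_mem : e7y K ∈ JE7 K := by
  have h := Submodule.mul_mem_mul
    (Submodule.mul_mem_mul
      (show (1 : RE7 K) ∈ (⊤ : Submodule K (RE7 K)) from Submodule.mem_top)
      (Submodule.subset_span (show e7y K ∈ ({e7x K, e7y K} : Set (RE7 K)) by simp)))
    (show (1 : RE7 K) ∈ (⊤ : Submodule K (RE7 K)) from Submodule.mem_top)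
  simpa [JE7] using h

private lemma e7_mulJ (m n k : ℕ) (hk : m + n = k) {a b : RE7 K}
    (ha : a ∈ JE7 K ^ m) (hb : b ∈ JE7 K ^ n) :
    a * b ∈ JE7 K ^ k := by
  subst hk; rw [pow_add]; exact Submodule.mul_mem_mul ha hb

private lemma e7_Jpow_le (n : ℕ) : JE7 K ^ (n + 2) ≤ JE7 K ^ (n + 1) := by
  have h1 : JE7 K ^ (n + 1) * ⊤ = JE7 K ^ (n + 1) := by
    rw [pow_succ, mul_assoc, e7_J_mul_top]
  calc JE7 K ^ (n + 2) = JE7 K ^ (n + 1) * JE7 K := pow_succ _ _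
    _ ≤ JE7 K ^ (n + 1) * ⊤ := mul_le_mul' le_rfl le_top
    _ = JE7 K ^ (n + 1) := h1

end Aux


/-- In `R(E₇) = K⟨x,y⟩/(x², y³, (x+y)⁴)`, if `f = θ₁·xy + θ₂·yx + θ₃·y² + g` with `g ∈ J³`,
where `J` is the two-sided ideal generated by `x` and `y`, then
`(x + y + f)⁴ − (θ₁ + θ₂ − 2θ₃)·yxyxy ∈ J⁶`. -/
theorem e7_pow_four_congr_mod_J6 (K : Type*) [CommRing K]
    (θ₁ θ₂ θ₃ : K) (f g : RE7 K) (hg : g ∈ (JE7 K) ^ 3)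
    (hf : f = θ₁ • (e7x K * e7y K) + θ₂ • (e7y K * e7x K) + θ₃ • (e7y K * e7y K) + g) :
    (e7x K + e7y K + f) ^ 4
        - (θ₁ + θ₂ - 2 * θ₃) • (e7y K * e7x K * e7y K * e7x K * e7y K) ∈ (JE7 K) ^ 6 := by
  have hx2 : e7x K * e7x K = 0 := e7_xx K
  have hy3 : e7y K * (e7y K * e7y K) = 0 := e7_yyy K
  have hs4 : (e7x K + e7y K) ^ 4 = 0 := e7_s4 K
  have hx1 : e7x K ∈ JE7 K ^ 1 := by simpa using e7_x_mem K
  have hy1 : e7y K ∈ JE7 K ^ 1 := by simpa using e7_y_mem K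
  set x := e7x K with hxdef
  set y := e7y K with hydef
  set s := x + y with hsdef
  set w := y * x * y * x * y with hwdef
  have hsJ : s ∈ JE7 K ^ 1 := add_mem hx1 hy1
  have hs2J : s ^ 2 ∈ JE7 K ^ 2 := by rw [pow_two s]; exact e7_mulJ K 1 1 2 rfl hsJ hsJ
  have hs3J : s ^ 3 ∈ JE7 K ^ 3 := by
    rw [pow_succ s 2]; exact e7_mulJ K 2 1 3 rfl hs2J hsJ
  have hfJ2 : f ∈ JE7 K ^ 2 := by
    rw [hf]
    refine add_mem (add_mem (add_mem ?_ ?_) ?_) (e7_Jpow_le K 1 hg)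
    · exact Submodule.smul_mem _ _ (e7_mulJ K 1 1 2 rfl hx1 hy1)
    · exact Submodule.smul_mem _ _ (e7_mulJ K 1 1 2 rfl hy1 hx1)
    · exact Submodule.smul_mem _ _ (e7_mulJ K 1 1 2 rfl hy1 hy1)
  -- the three degree-5 word identities
  have h1 : (x*y)*s^3 + s*((x*y)*s^2) + s^2*((x*y)*s) + s^3*(x*y) = w := by
    have e : (x*y)*s^3 + s*((x*y)*s^2) + s^2*((x*y)*s) + s^3*(x*y)
        = w - (x*x)*x*x*x - (x*x)*x*x*x - (x*x)*x*x*y - (x*x)*x*y*x - (x*x)*x*y*y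
          - (x*x)*y*x*x - (x*x)*y*y*x - (x*x)*y*y*y - y*(x*x)*x*x - x*y*(x*x)*x
          - y*y*(x*x)*x - x*y*y*(x*x) - y*y*y*(x*x) - (y*(y*y))*y*x - (y*(y*y))*y*y
          - x*(y*(y*y))*x - x*(y*(y*y))*y + x*s^4 + x*s^4 + y*s^4 := by
      rw [hwdef, hsdef]; noncomm_ring
    rw [e, hx2, hy3, hs4]
    simp
  have h2 : (y*x)*s^3 + s*((y*x)*s^2) + s^2*((y*x)*s) + s^3*(y*x) = w := by
    have e : (y*x)*s^3 + s*((y*x)*s^2) + s^2*((y*x)*s) + s^3*(y*x)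
        = w - (x*x)*x*x*x - (x*x)*x*x*x - (x*x)*x*x*y - (x*x)*x*y*x - (x*x)*x*y*y
          - (x*x)*y*x*x - (x*x)*y*y*x - (x*x)*y*y*y - y*(x*x)*x*x - x*y*(x*x)*x
          - y*y*(x*x)*x - x*y*y*(x*x) - y*y*y*(x*x) - (y*(y*y))*y*x - (y*(y*y))*y*y
          - x*(y*(y*y))*x - x*(y*(y*y))*y + x*s^4 + s^4*x + y*s^4 := by
      rw [hwdef, hsdef]; noncomm_ring
    rw [e, hx2, hy3, hs4]
    simp
  have h3 : (y*y)*s^3 + s*((y*y)*s^2) + s^2*((y*y)*s) + s^3*(y*y) = -(w + w) := by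
    have e : (y*y)*s^3 + s*((y*y)*s^2) + s^2*((y*y)*s) + s^3*(y*y)
        = -(w + w) - (x*x)*x*x*y - (x*x)*y*x*y + (x*x)*y*y*x + (x*x)*y*y*y
          - y*(x*x)*x*x - y*(x*x)*x*y - y*(x*x)*x*y - y*(x*x)*y*x - y*(x*x)*y*y
          - x*y*(x*x)*y - y*y*(x*x)*y + x*y*y*(x*x) - y*x*y*(x*x) + y*y*y*(x*x)
          + (y*(y*y))*y*x + (y*(y*y))*y*x + (y*(y*y))*y*y + (y*(y*y))*y*y
          + x*(y*(y*y))*x + x*(y*(y*y))*x + x*(y*(y*y))*y + x*(y*(y*y))*y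
          + x*s^4 - s^4*x + y*s^4 + y*s^4 := by
      rw [hwdef, hsdef]; noncomm_ring
    rw [e, hx2, hy3, hs4]
    simp
  -- push the scalars through
  have m1 : f*s^3 = θ₁ • ((x*y)*s^3) + θ₂ • ((y*x)*s^3) + θ₃ • ((y*y)*s^3) + g*s^3 := by
    rw [hf]; simp only [add_mul, smul_mul_assoc]
  have m2 : s*(f*s^2) = θ₁ • (s*((x*y)*s^2)) + θ₂ • (s*((y*x)*s^2)) + θ₃ • (s*((y*y)*s^2))
      + s*(g*s^2) := by
    rw [hf]; simp only [add_mul, mul_add, smul_mul_assoc, mul_smul_comm]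
  have m3 : s^2*(f*s) = θ₁ • (s^2*((x*y)*s)) + θ₂ • (s^2*((y*x)*s)) + θ₃ • (s^2*((y*y)*s))
      + s^2*(g*s) := by
    rw [hf]; simp only [add_mul, mul_add, smul_mul_assoc, mul_smul_comm]
  have m4 : s^3*f = θ₁ • (s^3*(x*y)) + θ₂ • (s^3*(y*x)) + θ₃ • (s^3*(y*y)) + s^3*g := by
    rw [hf]; simp only [mul_add, mul_smul_comm]
  have hcomb : f*s^3 + s*(f*s^2) + s^2*(f*s) + s^3*f
      = (θ₁ + θ₂ - 2*θ₃) • w + (g*s^3 + s*(g*s^2) + s^2*(g*s) + s^3*g) := by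
    rw [m1, m2, m3, m4]
    linear_combination (norm := module) θ₁ • h1 + θ₂ • h2 + θ₃ • h3
  have exp : (s + f)^4 = s^4 + (f*s^3 + s*(f*s^2) + s^2*(f*s) + s^3*f)
      + (f*(f*(s*s)) + f*(s*(f*s)) + f*(s*(s*f)) + s*(f*(f*s)) + s*(f*(s*f)) + s*(s*(f*f))
        + f*(f*(f*s)) + f*(f*(s*f)) + f*(s*(f*f)) + s*(f*(f*f)) + f*(f*(f*f))) := by
    noncomm_ring
  have final_eq : (x + y + f)^4 - (θ₁ + θ₂ - 2*θ₃) • w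
      = (g*s^3 + s*(g*s^2) + s^2*(g*s) + s^3*g)
      + (f*(f*(s*s)) + f*(s*(f*s)) + f*(s*(s*f)) + s*(f*(f*s)) + s*(f*(s*f)) + s*(s*(f*f))
        + f*(f*(f*s)) + f*(f*(s*f)) + f*(s*(f*f)) + s*(f*(f*f)) + f*(f*(f*f))) := by
    rw [← hsdef, exp, hcomb, hs4]
    abel
  rw [final_eq]
  have J76 : JE7 K ^ 7 ≤ JE7 K ^ 6 := e7_Jpow_le K 5
  have J87 : JE7 K ^ 8 ≤ JE7 K ^ 7 := e7_Jpow_le K 6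
  refine add_mem (add_mem (add_mem (add_mem ?_ ?_) ?_) ?_) ?_
  · exact e7_mulJ K 3 3 6 rfl hg hs3J
  · exact e7_mulJ K 1 5 6 rfl hsJ (e7_mulJ K 3 2 5 rfl hg hs2J)
  · exact e7_mulJ K 2 4 6 rfl hs2J (e7_mulJ K 3 1 4 rfl hg hsJ)
  · exact e7_mulJ K 3 3 6 rfl hs3J hg
  refine add_mem (add_mem (add_mem (add_mem (add_mem (add_mem (add_mem (add_mem (add_mem
    (add_mem ?_ ?_) ?_) ?_) ?_) ?_) ?_) ?_) ?_) ?_) ?_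
  · exact e7_mulJ K 2 4 6 rfl hfJ2 (e7_mulJ K 2 2 4 rfl hfJ2 (e7_mulJ K 1 1 2 rfl hsJ hsJ))
  · exact e7_mulJ K 2 4 6 rfl hfJ2 (e7_mulJ K 1 3 4 rfl hsJ (e7_mulJ K 2 1 3 rfl hfJ2 hsJ))
  · exact e7_mulJ K 2 4 6 rfl hfJ2 (e7_mulJ K 1 3 4 rfl hsJ (e7_mulJ K 1 2 3 rfl hsJ hfJ2))
  · exact e7_mulJ K 1 5 6 rfl hsJ (e7_mulJ K 2 3 5 rfl hfJ2 (e7_mulJ K 2 1 3 rfl hfJ2 hsJ))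
  · exact e7_mulJ K 1 5 6 rfl hsJ (e7_mulJ K 2 3 5 rfl hfJ2 (e7_mulJ K 1 2 3 rfl hsJ hfJ2))
  · exact e7_mulJ K 1 5 6 rfl hsJ (e7_mulJ K 1 4 5 rfl hsJ (e7_mulJ K 2 2 4 rfl hfJ2 hfJ2))
  · exact J76 (e7_mulJ K 2 5 7 rfl hfJ2 (e7_mulJ K 2 3 5 rfl hfJ2 (e7_mulJ K 2 1 3 rfl hfJ2 hsJ)))
  · exact J76 (e7_mulJ K 2 5 7 rfl hfJ2 (e7_mulJ K 2 3 5 rfl hfJ2 (e7_mulJ K 1 2 3 rfl hsJ hfJ2)))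
  · exact J76 (e7_mulJ K 2 5 7 rfl hfJ2 (e7_mulJ K 1 4 5 rfl hsJ (e7_mulJ K 2 2 4 rfl hfJ2 hfJ2)))
  · exact J76 (e7_mulJ K 1 6 7 rfl hsJ (e7_mulJ K 2 4 6 rfl hfJ2 (e7_mulJ K 2 2 4 rfl hfJ2 hfJ2)))
  · exact J76 (J87 (e7_mulJ K 2 6 8 rfl hfJ2 (e7_mulJ K 2 4 6 rfl hfJ2 (e7_mulJ K 2 2 4 rfl hfJ2 hfJ2))))
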